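/- (First-iterate guarantee, BP case, k_Q dominant regime) Let F = Q + G with Q monotone submodular (curvature k_Q) and G monotone supermodular (curvature k^G < 1), both normalized and nonnegative. Let τ₀ ∈ C, m^σ the tight modular lower bound of Q at τ₀ and m the tight modular lower bound of G at τ₀, and τ₁ ∈ C a maximizer of m^σ + m over C. Then F(τ₁) ≥ ((1-k_Q)(1-k^G) - k^G)/(1-k^G) · Q(τ*) + ((1-k^G)² - k^G)/(1-k^G) · G(τ*), where τ* maximizes F over C. -/

import Mathlib

open Finset

def Submodular {V : Type*} [DecidableEq V] (F : Finset V → ℝ) : Prop :=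
  ∀ A B : Finset V, ∀ v : V, A ⊆ B → v ∉ B →
    F (insert v B) - F B ≤ F (insert v A) - F A

def Supermodular {V : Type*} [DecidableEq V] (F : Finset V → ℝ) : Prop :=
  ∀ A B : Finset V, ∀ v : V, A ⊆ B → v ∉ B →
    F (insert v A) - F A ≤ F (insert v B) - F B

def MonotoneSetFun {V : Type*} [DecidableEq V] (F : Finset V → ℝ) : Prop :=
  ∀ A B : Finset V, A ⊆ B → F A ≤ F B

def prefixSet {V : Type*} [Fintype V] [DecidableEq V]
    (σ : Fin (Fintype.card V) ≃ V) (k : ℕ) : Finset V :=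
  (Finset.univ.filter (fun i : Fin (Fintype.card V) => (i : ℕ) < k)).image σ

/-- The subgradient modular lower bound of a submodular `Q` given permutation `σ`. -/
def modularLB {V : Type*} [Fintype V] [DecidableEq V]
    (Q : Finset V → ℝ) (σ : Fin (Fintype.card V) ≃ V) (Y : Finset V) : ℝ :=
  ∑ v ∈ Y, (Q (prefixSet σ ((σ.symm v : ℕ) + 1)) - Q (prefixSet σ (σ.symm v : ℕ)))

/-- The tight modular lower bound of a supermodular `G` at `X`. -/
def supermodularLB {V : Type*} [Fintype V] [DecidableEq V]
    (G : Finset V → ℝ) (X Y : Finset V) : ℝ :=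
  G X - ∑ j ∈ X \ Y, (G (insert j (X.erase j)) - G (X.erase j)) + ∑ j ∈ Y \ X, G {j}

section AuxLemmas
variable {V : Type*} [Fintype V] [DecidableEq V]

lemma mem_prefixSet {σ : Fin (Fintype.card V) ≃ V} {k : ℕ} {v : V} :
    v ∈ prefixSet σ k ↔ (σ.symm v : ℕ) < k := by
  simp only [prefixSet, Finset.mem_image, Finset.mem_filter, Finset.mem_univ, true_and]
  constructor
  · rintro ⟨i, hi, rfl⟩; simpa using hi
  · intro h; exact ⟨σ.symm v, h, by simp⟩

lemma insert_prefixSet (σ : Fin (Fintype.card V) ≃ V) (i : Fin (Fintype.card V)) :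
    insert (σ i) (prefixSet σ (i : ℕ)) = prefixSet σ ((i : ℕ) + 1) := by
  ext w
  simp only [Finset.mem_insert, mem_prefixSet, Nat.lt_succ_iff]
  constructor
  · rintro (rfl | h)
    · simp
    · exact le_of_lt h
  · intro h
    rcases lt_or_eq_of_le h with h | h
    · exact Or.inr h
    · left
      have : σ.symm w = i := Fin.ext h
      rw [← this]; simp

lemma notmem_prefixSet_self (σ : Fin (Fintype.card V) ≃ V) (i : Fin (Fintype.card V)) :
    σ i ∉ prefixSet σ (i : ℕ) := by
  rw [mem_prefixSet]; simp

lemma submod_subadd (Q : Finset V → ℝ) (hQ : Submodular Q) (h0 : Q ∅ = 0) (Y : Finset V) :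
    Q Y ≤ ∑ v ∈ Y, Q {v} := by
  induction Y using Finset.cons_induction with
  | empty => simp [h0]
  | cons v s hv ih =>
    have h := hQ ∅ s v (Finset.empty_subset s) hv
    rw [Finset.sum_cons, Finset.cons_eq_insert]
    simp only [LawfulSingleton.insert_empty_eq, h0] at h
    linarith

lemma supermod_superadd (G : Finset V → ℝ) (hG : Supermodular G) (h0 : G ∅ = 0) (Y : Finset V) :
    ∑ v ∈ Y, G {v} ≤ G Y := by
  induction Y using Finset.cons_induction with
  | empty => simp [h0]
  | cons v s hv ih =>
    have h := hG ∅ s v (Finset.empty_subset s) hv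
    rw [Finset.sum_cons, Finset.cons_eq_insert]
    simp only [LawfulSingleton.insert_empty_eq, h0] at h
    linarith

lemma supermod_le_sum_marg (G : Finset V → ℝ) (hG : Supermodular G) (h0 : G ∅ = 0)
    (Y : Finset V) : G Y ≤ ∑ v ∈ Y, (G univ - G (univ.erase v)) := by
  induction Y using Finset.cons_induction with
  | empty => simp [h0]
  | cons v s hv ih =>
    have hsub : s ⊆ univ.erase v := fun w hw =>
      Finset.mem_erase.mpr ⟨fun h => hv (h ▸ hw), Finset.mem_univ w⟩
    have h := hG s (univ.erase v) v hsub (Finset.notMem_erase v univ)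
    rw [Finset.insert_erase (Finset.mem_univ v)] at h
    rw [Finset.sum_cons, Finset.cons_eq_insert]
    linarith

lemma modularLB_le (Q : Finset V → ℝ) (hQ : Submodular Q) (h0 : Q ∅ = 0)
    (σ : Fin (Fintype.card V) ≃ V) (Y : Finset V) : modularLB Q σ Y ≤ Q Y := by
  induction Y using Finset.strongInduction with
  | _ Y ih =>
    rcases Y.eq_empty_or_nonempty with rfl | hne
    · simp [modularLB, h0]
    · have hne' : (Y.image σ.symm).Nonempty := hne.image _
      set i := (Y.image σ.symm).max' hne' with hidef
      have hiY : σ i ∈ Y := by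
        have hm := Finset.max'_mem _ hne'
        rw [← hidef] at hm
        rcases Finset.mem_image.mp hm with ⟨w, hw, hwi⟩
        rw [← hwi]; simpa using hw
      have hsub : Y.erase (σ i) ⊆ prefixSet σ (i : ℕ) := by
        intro w hw
        rw [mem_prefixSet]
        have hwY := Finset.mem_of_mem_erase hw
        have hle : σ.symm w ≤ i := Finset.le_max' _ _ (Finset.mem_image_of_mem _ hwY)
        have hne2 : σ.symm w ≠ i := by
          intro h
          exact Finset.ne_of_mem_erase hw (by rw [← h]; simp)
        exact lt_of_le_of_ne hle (fun h => hne2 (Fin.ext h))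
      have hsubm := hQ (Y.erase (σ i)) (prefixSet σ (i : ℕ)) (σ i) hsub
        (notmem_prefixSet_self σ i)
      rw [insert_prefixSet, Finset.insert_erase hiY] at hsubm
      have hIH := ih (Y.erase (σ i)) (Finset.erase_ssubset hiY)
      have hsplit : modularLB Q σ Y = modularLB Q σ (Y.erase (σ i))
          + (Q (prefixSet σ ((i : ℕ) + 1)) - Q (prefixSet σ (i : ℕ))) := by
        unfold modularLB
        rw [← Finset.sum_erase_add Y _ hiY]
        simp
      rw [hsplit]
      linarith

lemma modularLB_ge (Q : Finset V → ℝ) (hQ : Submodular Q)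
    (σ : Fin (Fintype.card V) ≃ V) (Y : Finset V) :
    ∑ v ∈ Y, (Q univ - Q (univ.erase v)) ≤ modularLB Q σ Y := by
  apply Finset.sum_le_sum
  intro v _
  have hsub : prefixSet σ ((σ.symm v : ℕ)) ⊆ univ.erase v := by
    intro w hw
    refine Finset.mem_erase.mpr ⟨?_, Finset.mem_univ w⟩
    rintro rfl
    exact absurd (mem_prefixSet.mp hw) (lt_irrefl _)
  have h := hQ (prefixSet σ ((σ.symm v : ℕ))) (univ.erase v) v hsub
    (Finset.notMem_erase v univ)
  rw [Finset.insert_erase (Finset.mem_univ v)] at h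
  have hins : insert v (prefixSet σ ((σ.symm v : ℕ))) = prefixSet σ ((σ.symm v : ℕ) + 1) := by
    have := insert_prefixSet σ (σ.symm v)
    simpa using this
  rw [hins] at h
  exact h

lemma supermod_remove (G : Finset V → ℝ) (hG : Supermodular G) (X : Finset V) :
    ∀ T : Finset V, T ⊆ X →
      G X - ∑ j ∈ T, (G (insert j (X.erase j)) - G (X.erase j)) ≤ G (X \ T) := by
  intro T
  induction T using Finset.cons_induction with
  | empty => simp
  | cons j T hj ih =>
    intro hsub
    rw [Finset.cons_eq_insert] at hsub ⊢
    have hjX : j ∈ X := hsub (Finset.mem_insert_self j T)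
    have hTX : T ⊆ X := (Finset.insert_subset_iff.mp hsub).2
    have hjXT : j ∈ X \ T := Finset.mem_sdiff.mpr ⟨hjX, hj⟩
    have hsub2 : (X \ T).erase j ⊆ X.erase j :=
      Finset.erase_subset_erase _ (Finset.sdiff_subset)
    have h := hG ((X \ T).erase j) (X.erase j) j hsub2 (Finset.notMem_erase j X)
    rw [Finset.insert_erase hjXT] at h
    rw [Finset.sum_insert hj, Finset.sdiff_insert]
    have hIH := ih hTX
    linarith

lemma supermod_add (G : Finset V → ℝ) (hG : Supermodular G) (h0 : G ∅ = 0) (S : Finset V) :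
    ∀ T : Finset V, Disjoint S T → G S + ∑ j ∈ T, G {j} ≤ G (S ∪ T) := by
  intro T
  induction T using Finset.cons_induction with
  | empty => simp
  | cons j T hj ih =>
    intro hdis
    rw [Finset.cons_eq_insert] at hdis ⊢
    have hdis' : Disjoint S T := hdis.mono_right (Finset.subset_insert j T)
    have hjST : j ∉ S ∪ T := by
      rw [Finset.mem_union]
      rintro (h | h)
      · exact (Finset.disjoint_left.mp hdis) h (Finset.mem_insert_self j T)
      · exact hj h
    have h := hG ∅ (S ∪ T) j (Finset.empty_subset _) hjST
    simp only [LawfulSingleton.insert_empty_eq, h0] at h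
    rw [Finset.sum_insert hj, Finset.union_insert]
    have hIH := ih hdis'
    linarith

lemma supermodLB_le (G : Finset V → ℝ) (hG : Supermodular G) (h0 : G ∅ = 0)
    (X Y : Finset V) : supermodularLB G X Y ≤ G Y := by
  have h1 := supermod_remove G hG X (X \ Y) Finset.sdiff_subset
  rw [Finset.sdiff_sdiff_self_left] at h1
  have hdis : Disjoint (X ∩ Y) (Y \ X) := by
    have : Disjoint X (Y \ X) := Finset.sdiff_disjoint.symm
    exact this.mono_left Finset.inter_subset_left
  have h2 := supermod_add G hG h0 (X ∩ Y) (Y \ X) hdis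
  have hu : X ∩ Y ∪ Y \ X = Y := by
    ext w; simp only [Finset.mem_union, Finset.mem_inter, Finset.mem_sdiff]; tauto
  rw [hu] at h2
  unfold supermodularLB
  linarith

end AuxLemmas

/-- First-iterate guarantee of GTO for monotone BP rewards `F = Q + G`. -/
theorem first_iterate_BP
    {V : Type*} [Fintype V] [DecidableEq V] [Nonempty V]
    (Q G : Finset V → ℝ)
    (hQsub : Submodular Q) (hQmono : MonotoneSetFun Q) (hQ0 : Q ∅ = 0)
    (hQnn : ∀ S : Finset V, 0 ≤ Q S) (hQpos : ∀ v : V, 0 < Q {v})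
    (hGsup : Supermodular G) (hGmono : MonotoneSetFun G) (hG0 : G ∅ = 0)
    (hGnn : ∀ S : Finset V, 0 ≤ G S)
    (hGpos : ∀ v : V, 0 < G univ - G (univ.erase v))
    (kQ kG : ℝ)
    (hkQ : kQ = 1 - Finset.univ.inf' Finset.univ_nonempty
            (fun w : V => (Q univ - Q (univ.erase w)) / Q {w}))
    (hkG : kG = 1 - Finset.univ.inf' Finset.univ_nonempty
            (fun v : V => G {v} / (G univ - G (univ.erase v))))
    (hkG1 : kG < 1)
    (C : Finset (Finset V)) (τ₀ τ₁ τstar : Finset V)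
    (hτ₀ : τ₀ ∈ C) (hτ₁ : τ₁ ∈ C) (hτstar : τstar ∈ C)
    (σ : Fin (Fintype.card V) ≃ V)
    (hσ : ∀ i : Fin (Fintype.card V), σ i ∈ τ₀ ↔ (i : ℕ) < τ₀.card)
    (hmax : ∀ τ ∈ C,
      modularLB Q σ τ + supermodularLB G τ₀ τ
        ≤ modularLB Q σ τ₁ + supermodularLB G τ₀ τ₁)
    (hopt : ∀ τ ∈ C, Q τ + G τ ≤ Q τstar + G τstar) :
    ((1 - kQ) * (1 - kG) - kG) / (1 - kG) * Q τstar
      + ((1 - kG) ^ 2 - kG) / (1 - kG) * G τstar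
      ≤ Q τ₁ + G τ₁ := by
  have hβpos : (0:ℝ) < 1 - kG := by linarith
  have hβne : (1:ℝ) - kG ≠ 0 := ne_of_gt hβpos
  have hinfQ : 1 - kQ = Finset.univ.inf' Finset.univ_nonempty
      (fun w : V => (Q univ - Q (univ.erase w)) / Q {w}) := by rw [hkQ]; ring
  have hinfG : 1 - kG = Finset.univ.inf' Finset.univ_nonempty
      (fun v : V => G {v} / (G univ - G (univ.erase v))) := by rw [hkG]; ring
  have hα : ∀ w : V, (1 - kQ) * Q {w} ≤ Q univ - Q (univ.erase w) := by
    intro w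
    have h1 : 1 - kQ ≤ (Q univ - Q (univ.erase w)) / Q {w} := by
      rw [hinfQ]; exact Finset.inf'_le _ (Finset.mem_univ w)
    exact (le_div_iff₀ (hQpos w)).mp h1
  have hαnn : 0 ≤ 1 - kQ := by
    rw [hinfQ]
    apply Finset.le_inf'
    intro w _
    exact div_nonneg (sub_nonneg.mpr (hQmono _ _ (Finset.erase_subset _ _))) (hQpos w).le
  have hβ : ∀ v : V, (1 - kG) * (G univ - G (univ.erase v)) ≤ G {v} := by
    intro v
    have h1 : 1 - kG ≤ G {v} / (G univ - G (univ.erase v)) := by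
      rw [hinfG]; exact Finset.inf'_le _ (Finset.mem_univ v)
    exact (le_div_iff₀ (hGpos v)).mp h1
  have hkGnn : 0 ≤ kG := by
    obtain ⟨v⟩ := (inferInstance : Nonempty V)
    have h1 : 1 - kG ≤ G {v} / (G univ - G (univ.erase v)) := by
      rw [hinfG]; exact Finset.inf'_le _ (Finset.mem_univ v)
    have h2 : G {v} ≤ G univ - G (univ.erase v) := by
      have h := hGsup ∅ (univ.erase v) v (Finset.empty_subset _) (Finset.notMem_erase v univ)
      rw [Finset.insert_erase (Finset.mem_univ v)] at h
      simp only [LawfulSingleton.insert_empty_eq, hG0] at h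
      linarith
    have h3 : G {v} / (G univ - G (univ.erase v)) ≤ 1 := (div_le_one (hGpos v)).mpr h2
    linarith
  -- submodular side
  have h7 : (1 - kQ) * Q τstar ≤ modularLB Q σ τstar := by
    have h4 := modularLB_ge Q hQsub σ τstar
    have h5 : ∑ v ∈ τstar, (1 - kQ) * Q {v}
        ≤ ∑ v ∈ τstar, (Q univ - Q (univ.erase v)) :=
      Finset.sum_le_sum (fun v _ => hα v)
    rw [← Finset.mul_sum] at h5
    have h6 : (1 - kQ) * Q τstar ≤ (1 - kQ) * ∑ v ∈ τstar, Q {v} :=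
      mul_le_mul_of_nonneg_left (submod_subadd Q hQsub hQ0 τstar) hαnn
    linarith
  -- supermodular side
  have h8 : ∑ j ∈ τ₀ \ τstar, (G (insert j (τ₀.erase j)) - G (τ₀.erase j))
      ≤ (∑ j ∈ τ₀ \ τstar, G {j}) / (1 - kG) := by
    rw [Finset.sum_div]
    apply Finset.sum_le_sum
    intro j _
    have h := hGsup (τ₀.erase j) (univ.erase j) j
      (Finset.erase_subset_erase _ (Finset.subset_univ _)) (Finset.notMem_erase j univ)
    rw [Finset.insert_erase (Finset.mem_univ j)] at h
    have h9 : G univ - G (univ.erase j) ≤ G {j} / (1 - kG) :=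
      (le_div_iff₀ hβpos).mpr (by linarith [hβ j])
    linarith
  have hsplit0 : ∑ j ∈ τ₀ ∩ τstar, G {j} + ∑ j ∈ τ₀ \ τstar, G {j}
      = ∑ j ∈ τ₀, G {j} := Finset.sum_inter_add_sum_sdiff τ₀ τstar _
  have h10 : ∑ j ∈ τ₀, G {j} ≤ G τ₀ := supermod_superadd G hGsup hG0 τ₀
  have hsplitStar : ∑ j ∈ τ₀ ∩ τstar, G {j} + ∑ j ∈ τstar \ τ₀, G {j}
      = ∑ j ∈ τstar, G {j} := by
    rw [Finset.inter_comm]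
    exact Finset.sum_inter_add_sum_sdiff τstar τ₀ _
  have h13 : (1 - kG) * G τstar ≤ ∑ j ∈ τstar, G {j} := by
    have a := supermod_le_sum_marg G hGsup hG0 τstar
    have b : ∑ v ∈ τstar, (1 - kG) * (G univ - G (univ.erase v))
        ≤ ∑ v ∈ τstar, G {v} := Finset.sum_le_sum (fun v _ => hβ v)
    rw [← Finset.mul_sum] at b
    have c : (1 - kG) * G τstar ≤ (1 - kG) * ∑ v ∈ τstar, (G univ - G (univ.erase v)) :=
      mul_le_mul_of_nonneg_left a hβpos.le
    linarith
  have hsInn : 0 ≤ ∑ j ∈ τ₀ ∩ τstar, G {j} := Finset.sum_nonneg (fun j _ => hGnn _)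
  have hsA_le : ∑ j ∈ τ₀ \ τstar, G {j} ≤ Q τstar + G τstar := by
    have ho := hopt τ₀ hτ₀
    have hq := hQnn τ₀
    linarith
  have hdivsplit : (∑ j ∈ τ₀ \ τstar, G {j}) / (1 - kG)
      = ∑ j ∈ τ₀ \ τstar, G {j} + kG / (1 - kG) * ∑ j ∈ τ₀ \ τstar, G {j} := by
    field_simp
    ring
  have hcnn : 0 ≤ kG / (1 - kG) := div_nonneg hkGnn hβpos.le
  have hc_mul : kG / (1 - kG) * ∑ j ∈ τ₀ \ τstar, G {j}
      ≤ kG / (1 - kG) * (Q τstar + G τstar) :=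
    mul_le_mul_of_nonneg_left hsA_le hcnn
  have hGbd : (1 - kG) * G τstar - kG / (1 - kG) * (Q τstar + G τstar)
      ≤ supermodularLB G τ₀ τstar := by
    unfold supermodularLB
    linarith
  -- chain
  have hA1 := modularLB_le Q hQsub hQ0 σ τ₁
  have hA2 := supermodLB_le G hGsup hG0 τ₀ τ₁
  have hA3 := hmax τstar hτstar
  have key : ((1 - kQ) * (1 - kG) - kG) / (1 - kG) * Q τstar
      + ((1 - kG) ^ 2 - kG) / (1 - kG) * G τstar
      = (1 - kQ) * Q τstar + (1 - kG) * G τstar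
        - kG / (1 - kG) * (Q τstar + G τstar) := by
    field_simp
    ring
  rw [key]
  linarith
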